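/- Assume Assumptions A hold with q ∈ (0, 1/2), set q₁ = q/(1−q), and let z ∈ H satisfy q₁·‖z − y‖ ≤ R and ‖z − y‖ ≤ R. Define the Newton iteration u₀ = z, u_{n+1} = u_n − [F'(u_n)]^{−1}(F(u_n) − f). Then for every n ≥ 1, ‖u_n − y‖ ≤ q₁^{n−1}·R. -/

import Mathlib

open Metric Set Filter

theorem stmt_13
    {H : Type*} [NormedAddCommGroup H] [InnerProductSpace ℝ H] [CompleteSpace H]
    (F : H → H) (F' : H → H →L[ℝ] H) (y f : H) (R m q : ℝ)
    (hf : F y = f) (hR : 0 < R)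
    (hdiff : ∀ u ∈ closedBall y R, HasFDerivAt F (F' u) u)
    (Q : H →L[ℝ] H)
    (hQl : Q.comp (F' y) = ContinuousLinearMap.id ℝ H)
    (hQr : (F' y).comp Q = ContinuousLinearMap.id ℝ H)
    (hm : 0 < m) (hQm : ‖Q‖ ≤ m)
    (ω : ℝ → ℝ)
    (hωcont : ContinuousOn ω (Icc 0 (2 * R)))
    (hωmono : StrictMonoOn ω (Icc 0 (2 * R)))
    (hω0 : ω 0 = 0)
    (hωF : ∀ u ∈ closedBall y R, ∀ v ∈ closedBall y R, ‖F' u - F' v‖ ≤ ω ‖u - v‖)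
    (hq : m * ω R = q) (hq0 : 0 < q) (hq1 : q < 1)
    (hqhalf : q < 1/2) (q₁ : ℝ) (hq₁ : q₁ = q / (1 - q))
    (z : H) (hz1 : q₁ * ‖z - y‖ ≤ R) (hz2 : ‖z - y‖ ≤ R)
    (u : ℕ → H) (S : ℕ → H →L[ℝ] H) (hu0 : u 0 = z)
    (hSl : ∀ n, (S n).comp (F' (u n)) = ContinuousLinearMap.id ℝ H)
    (hSr : ∀ n, (F' (u n)).comp (S n) = ContinuousLinearMap.id ℝ H)
    (hrec : ∀ n, u (n + 1) = u n - S n (F (u n) - f)) :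
    ∀ n : ℕ, 1 ≤ n → ‖u n - y‖ ≤ q₁ ^ (n - 1) * R := by
  have hq' : 0 < 1 - q := by linarith
  have hq₁0 : 0 ≤ q₁ := by rw [hq₁]; positivity
  have hq₁1 : q₁ < 1 := by
    rw [hq₁, div_lt_one hq']; linarith
  -- key step: one Newton step contracts by q₁
  have key : ∀ n, ‖u n - y‖ ≤ R → ‖u (n + 1) - y‖ ≤ q₁ * ‖u n - y‖ := by
    intro n hn
    set r := ‖u n - y‖ with hr
    have hr0 : 0 ≤ r := norm_nonneg _
    have hun : u n ∈ closedBall y R := by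
      rw [mem_closedBall, dist_eq_norm]; exact hn
    have hymem : y ∈ closedBall y R := mem_closedBall_self hR.le
    have hωr : ω r ≤ ω R := by
      rcases eq_or_lt_of_le hn with h | h
      · rw [h]
      · exact le_of_lt (hωmono ⟨hr0, by linarith⟩ ⟨hR.le, by linarith⟩ h)
    have hωr0 : 0 ≤ ω r := by
      rcases eq_or_lt_of_le hr0 with h | h
      · rw [← h, hω0]
      · rw [← hω0]; exact le_of_lt (hωmono ⟨le_refl 0, by linarith⟩ ⟨hr0, by linarith⟩ h)
    -- bound on S n
    have hS : ∀ x : H, ‖S n x‖ ≤ m / (1 - q) * ‖x‖ := by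
      intro x
      have e1 : F' (u n) (S n x) = x := by
        have := ContinuousLinearMap.ext_iff.mp (hSr n) x
        simpa using this
      have e2 : ∀ v : H, Q (F' y v) = v := by
        intro v
        have := ContinuousLinearMap.ext_iff.mp hQl v
        simpa using this
      have eD : ‖F' (u n) - F' y‖ ≤ ω r := hωF (u n) hun y hymem
      have e3 : S n x = Q x - Q ((F' (u n) - F' y) (S n x)) := by
        have : Q (F' (u n) (S n x)) = Q (F' y (S n x)) + Q ((F' (u n) - F' y) (S n x)) := by
          rw [← map_add]
          congr 1
          simp [ContinuousLinearMap.sub_apply]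
        rw [e1, e2] at this
        rw [this]; abel
      have hb : ‖S n x‖ ≤ m * ‖x‖ + q * ‖S n x‖ := by
        calc ‖S n x‖ = ‖Q x - Q ((F' (u n) - F' y) (S n x))‖ := by rw [← e3]
          _ ≤ ‖Q x‖ + ‖Q ((F' (u n) - F' y) (S n x))‖ := norm_sub_le _ _
          _ ≤ m * ‖x‖ + q * ‖S n x‖ := by
              gcongr
              · exact le_trans (Q.le_opNorm x) (mul_le_mul_of_nonneg_right hQm (norm_nonneg x))
              · calc ‖Q ((F' (u n) - F' y) (S n x))‖
                    ≤ ‖Q‖ * ‖(F' (u n) - F' y) (S n x)‖ := Q.le_opNorm _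
                  _ ≤ m * (‖F' (u n) - F' y‖ * ‖S n x‖) := by
                      gcongr
                      exact ContinuousLinearMap.le_opNorm _ _
                  _ ≤ m * (ω R * ‖S n x‖) := by
                      gcongr
                      exact le_trans eD hωr
                  _ = q * ‖S n x‖ := by rw [← hq]; ring
      rw [div_mul_eq_mul_div, le_div_iff₀ hq']
      nlinarith [norm_nonneg (S n x)]
    -- mean value estimate on segment
    have hmv : ‖F (u n) - f - F' (u n) (u n - y)‖ ≤ ω r * r := by
      rw [← hf]
      have hseg : segment ℝ y (u n) ⊆ closedBall y R :=
        (convex_closedBall y R).segment_subset hymem hun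
      have hder : ∀ x ∈ segment ℝ y (u n),
          HasFDerivWithinAt F (F' x) (segment ℝ y (u n)) x :=
        fun x hx => (hdiff x (hseg hx)).hasFDerivWithinAt
      have hbd : ∀ x ∈ segment ℝ y (u n), ‖F' x - F' (u n)‖ ≤ ω r := by
        intro x hx
        have hx' : ‖x - u n‖ ≤ r := by
          rcases hx with ⟨a, b, ha, hb, hab, rfl⟩
          have : a • y + b • u n - u n = a • (y - u n) := by
            rw [smul_sub]
            rw [show (b : ℝ) = 1 - a by linarith]
            module
          rw [this, norm_smul, Real.norm_eq_abs, abs_of_nonneg ha, hr, ← norm_neg (u n - y)]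
          have : -(u n - y) = y - u n := by abel
          rw [this]
          nlinarith [norm_nonneg (y - u n)]
        calc ‖F' x - F' (u n)‖ ≤ ω ‖x - u n‖ := hωF x (hseg hx) (u n) hun
          _ ≤ ω r := by
            rcases eq_or_lt_of_le hx' with h | h
            · rw [h]
            · exact le_of_lt (hωmono ⟨norm_nonneg _, by linarith⟩ ⟨hr0, by linarith⟩ h)
      have := (convex_segment y (u n)).norm_image_sub_le_of_norm_hasFDerivWithin_le'
        hder hbd (left_mem_segment ℝ y (u n)) (right_mem_segment ℝ y (u n))
      simpa [hr] using this
    -- express u (n+1) - y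
    have eS : S n (F' (u n) (u n - y)) = u n - y := by
      have := ContinuousLinearMap.ext_iff.mp (hSl n) (u n - y)
      simpa using this
    have estep : u (n + 1) - y = -(S n (F (u n) - f - F' (u n) (u n - y))) := by
      rw [hrec n]
      have hsplit : F (u n) - f = (F (u n) - f - F' (u n) (u n - y)) + F' (u n) (u n - y) := by
        abel
      rw [hsplit, map_add, eS]
      abel
    calc ‖u (n + 1) - y‖ = ‖S n (F (u n) - f - F' (u n) (u n - y))‖ := by
          rw [estep, norm_neg]
      _ ≤ m / (1 - q) * ‖F (u n) - f - F' (u n) (u n - y)‖ := hS _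
      _ ≤ m / (1 - q) * (ω R * r) :=
          mul_le_mul_of_nonneg_left (le_trans hmv (by gcongr)) (by positivity)
      _ = q₁ * r := by rw [hq₁, ← hq]; field_simp
  -- induction
  have main : ∀ n : ℕ, ‖u (n + 1) - y‖ ≤ q₁ ^ n * R := by
    intro n
    induction n with
    | zero =>
      have h := key 0 (by rw [hu0]; exact hz2)
      rw [hu0] at h
      simpa using le_trans h hz1
    | succ k ih =>
      have hle : ‖u (k + 1) - y‖ ≤ R := by
        refine le_trans ih ?_
        nlinarith [pow_le_one₀ hq₁0 hq₁1.le (n := k)]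
      calc ‖u (k + 1 + 1) - y‖ ≤ q₁ * ‖u (k + 1) - y‖ := key (k + 1) hle
        _ ≤ q₁ * (q₁ ^ k * R) := by gcongr
        _ = q₁ ^ (k + 1) * R := by ring
  intro n hn
  obtain ⟨k, rfl⟩ := Nat.exists_eq_add_of_le hn
  simpa [add_comm] using main k
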